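/- Let d ≥ 1, k ≥ 1 and n = dk. Let M_0, …, M_{d−1} ∈ ℂ^{k×k} with M_0 lower triangular, and let S ∈ ℂ^{n×n} be the associated block companion matrix. Then there exist vectors c_1, …, c_k ∈ ℂ^n such that S = (J − c_1 e_n^T)(J − c_2 e_n^T) ⋯ (J − c_k e_n^T), where J is the n×n downshift matrix; that is, S factors as a product of k Frobenius companion matrices of monic scalar polynomials of degree n. -/

import Mathlib

open Matrix

noncomputable section

/-- The `n × n` downshift matrix `J`: ones on the subdiagonal, zeros elsewhere. -/
def downshift (n : ℕ) : Matrix (Fin n) (Fin n) ℂ :=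
  fun p q => if (p : ℕ) = (q : ℕ) + 1 then 1 else 0

/-- The `dk × dk` block companion matrix built from `M 0, …, M (d-1)`:
identity blocks on the block subdiagonal and `-M (i)` in block row `i` (0-based) of the
last block column. -/
def blockCompanion (d k : ℕ) (hk : 0 < k) (M : ℕ → Matrix (Fin k) (Fin k) ℂ) :
    Matrix (Fin (d * k)) (Fin (d * k)) ℂ :=
  fun p q =>
    if (q : ℕ) < (d - 1) * k then (if (p : ℕ) = (q : ℕ) + k then 1 else 0)
    else - M ((p : ℕ) / k) ⟨(p : ℕ) % k, Nat.mod_lt _ hk⟩ ⟨(q : ℕ) % k, Nat.mod_lt _ hk⟩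

private lemma fr_sum_downshift {n : ℕ} (v : Fin n → ℂ) (p : Fin n) :
    ∑ r, downshift n p r * v r =
      if h : 0 < (p : ℕ) then v ⟨(p : ℕ) - 1, lt_of_le_of_lt (Nat.sub_le _ _) p.isLt⟩ else 0 := by
  split_ifs with h
  · rw [Fintype.sum_eq_single (⟨(p : ℕ) - 1, lt_of_le_of_lt (Nat.sub_le _ _) p.isLt⟩ : Fin n)]
    · have h1 : (p : ℕ) = ((⟨(p : ℕ) - 1, lt_of_le_of_lt (Nat.sub_le _ _) p.isLt⟩ : Fin n) : ℕ) + 1 := by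
        simp; omega
      simp only [downshift]
      rw [if_pos h1, one_mul]
    · intro r hr
      have h2 : ¬ ((p : ℕ) = (r : ℕ) + 1) := by
        intro hc
        apply hr
        apply Fin.ext
        simp only [Fin.val_mk]
        omega
      simp [downshift, h2]
  · apply Finset.sum_eq_zero
    intro r _
    have h2 : ¬ ((p : ℕ) = (r : ℕ) + 1) := by omega
    simp [downshift, h2]

private lemma fr_sum_single {n : ℕ} (a : ℂ) (l : Fin n) (v : Fin n → ℂ) :
    ∑ r, a * (Pi.single l (1 : ℂ) : Fin n → ℂ) r * v r = a * v l := by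
  rw [Fintype.sum_eq_single l]
  · simp
  · intro r hr
    simp [Pi.single_apply, hr]

private lemma fr_key (n : ℕ) (hn : 0 < n) :
    ∀ m : ℕ, m ≤ n → ∀ T : Matrix (Fin n) (Fin n) ℂ,
      (∀ p q : Fin n, (q : ℕ) + m < n → T p q = if (p : ℕ) = (q : ℕ) + m then 1 else 0) →
      (∀ p q : Fin n, n ≤ (q : ℕ) + m → (p : ℕ) + (n - m) < (q : ℕ) → T p q = 0) →
      ∃ c : Fin m → Fin n → ℂ,
        T = ((List.finRange m).map (fun j =>
          downshift n - vecMulVec (c j)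
            (Pi.single (⟨n - 1, Nat.sub_lt hn one_pos⟩ : Fin n) 1))).prod := by
  intro m
  induction m with
  | zero =>
    intro _ T hshift _
    refine ⟨finZeroElim, ?_⟩
    simp only [List.finRange_zero, List.map_nil, List.prod_nil]
    ext p q
    rw [hshift p q (by omega)]
    simp [Matrix.one_apply, Fin.ext_iff]
  | succ m ih =>
    intro hm T hshift hzero
    have hmn : m < n := by omega
    set l : Fin n := ⟨n - 1, Nat.sub_lt hn one_pos⟩ with hl
    set c₀ : Fin n → ℂ := fun p => - T p ⟨n - m - 1, by omega⟩ with hc₀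
    set T' : Matrix (Fin n) (Fin n) ℂ := fun p q =>
      if (q : ℕ) + m < n then (if (p : ℕ) = (q : ℕ) + m then 1 else 0)
      else if h : (p : ℕ) + 1 < n then T ⟨(p : ℕ) + 1, h⟩ q else 0 with hT'
    have hT'shift : ∀ p q : Fin n, (q : ℕ) + m < n →
        T' p q = if (p : ℕ) = (q : ℕ) + m then 1 else 0 := by
      intro p q h
      simp only [hT', if_pos h]
    have hT'zero : ∀ p q : Fin n, n ≤ (q : ℕ) + m → (p : ℕ) + (n - m) < (q : ℕ) → T' p q = 0 := by
      intro p q h1 h2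
      have hq : ¬ ((q : ℕ) + m < n) := by omega
      have hp1 : (p : ℕ) + 1 < n := by have := q.isLt; omega
      simp only [hT', if_neg hq, dif_pos hp1]
      exact hzero _ _ (by omega) (by simp only [Fin.val_mk]; omega)
    obtain ⟨c', hc'⟩ := ih (by omega) T' hT'shift hT'zero
    refine ⟨Fin.cases c₀ c', ?_⟩
    rw [List.finRange_succ, List.map_cons, List.prod_cons, List.map_map]
    have hcomp : ((fun j : Fin (m + 1) =>
        downshift n - vecMulVec (Fin.cases c₀ c' j) (Pi.single l 1)) ∘ Fin.succ)
        = fun j : Fin m => downshift n - vecMulVec (c' j) (Pi.single l 1) := by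
      funext j
      simp
    rw [hcomp, ← hc']
    ext p q
    rw [Matrix.mul_apply]
    simp only [Fin.cases_zero, Matrix.sub_apply, vecMulVec_apply, sub_mul]
    rw [Finset.sum_sub_distrib, fr_sum_downshift, fr_sum_single]
    rcases lt_trichotomy ((q : ℕ) + (m + 1)) n with hq | hq | hq
    · rw [hshift p q hq]
      have e1 : T' l q = 0 := by
        simp only [hT', hl]
        have : (q : ℕ) + m < n := by omega
        rw [if_pos this, if_neg (by omega)]
      rw [e1, mul_zero, sub_zero]
      by_cases hp : 0 < (p : ℕ)
      · rw [dif_pos hp]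
        have : (q : ℕ) + m < n := by omega
        simp only [hT', if_pos this]
        split_ifs <;> first | rfl | omega
      · rw [dif_neg hp]
        rw [if_neg (by omega)]
    · -- q + m + 1 = n : this is the special column
      have hq' : q = ⟨n - m - 1, by omega⟩ := Fin.ext (by simp only [Fin.val_mk]; omega)
      have e1 : T' l q = 1 := by
        simp only [hT', hl]
        have h1 : (q : ℕ) + m < n := by omega
        rw [if_pos h1, if_pos (by omega)]
      have e2 : (if h : 0 < (p : ℕ) then
          T' ⟨(p : ℕ) - 1, lt_of_le_of_lt (Nat.sub_le _ _) p.isLt⟩ q else 0) = 0 := by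
        split_ifs with hp
        · simp only [hT']
          have h1 : (q : ℕ) + m < n := by omega
          rw [if_pos h1, if_neg (by omega)]
        · rfl
      rw [e1, e2, mul_one, zero_sub, hc₀, hq']
      simp
    · -- q + m ≥ n : these columns of T' come from T shifted up
      have hql : ¬ ((q : ℕ) + m < n) := by omega
      have e1 : T' l q = 0 := by
        simp only [hT', hl]
        rw [if_neg hql, dif_neg (by omega)]
      rw [e1, mul_zero, sub_zero]
      by_cases hp : 0 < (p : ℕ)
      · rw [dif_pos hp]
        simp only [hT', if_neg hql]
        have hpn : (p : ℕ) - 1 + 1 < n := by have := p.isLt; omega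
        rw [dif_pos (by simpa using hpn)]
        congr 1
        apply Fin.ext
        simp only [Fin.val_mk]
        omega
      · rw [dif_neg hp]
        exact hzero p q (by omega) (by omega)

/-- **Frobenius factorization.**  If `M 0` is lower triangular, the block companion matrix
factors as a product of `k` Frobenius companion matrices `J - cⱼ eₙᵀ` of monic scalar
polynomials of degree `n = d * k`. -/
theorem frobenius_factorization (d k : ℕ) (hd : 1 ≤ d) (hk : 1 ≤ k)
    (M : ℕ → Matrix (Fin k) (Fin k) ℂ)
    (hM0 : ∀ i j : Fin k, i < j → M 0 i j = 0) :
    ∃ c : Fin k → (Fin (d * k) → ℂ),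
      blockCompanion d k hk M =
        ((List.finRange k).map (fun j =>
          downshift (d * k) -
            vecMulVec (c j)
              (Pi.single (⟨d * k - 1, by have := Nat.mul_pos hd hk; omega⟩ : Fin (d * k))
                1))).prod := by
  have hn : 0 < d * k := Nat.mul_pos hd hk
  have hdk : (d - 1) * k = d * k - k := Nat.sub_one_mul d k
  have hkn : k ≤ d * k := by
    calc k = 1 * k := (one_mul k).symm
    _ ≤ d * k := Nat.mul_le_mul_right k hd
  apply fr_key (d * k) hn k hkn
  · intro p q hq
    have h1 : (q : ℕ) < (d - 1) * k := by omega
    simp only [blockCompanion, if_pos h1]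
  · intro p q h1 h2
    have hql : ¬ ((q : ℕ) < (d - 1) * k) := by omega
    simp only [blockCompanion, if_neg hql, neg_eq_zero]
    have hpk : (p : ℕ) < k := by have := q.isLt; omega
    have hdiv : (p : ℕ) / k = 0 := Nat.div_eq_of_lt hpk
    have hpm : (p : ℕ) % k = (p : ℕ) := Nat.mod_eq_of_lt hpk
    have hqm : (q : ℕ) % k = (q : ℕ) - (d - 1) * k := by
      conv_lhs => rw [show (q : ℕ) = ((q : ℕ) - (d - 1) * k) + (d - 1) * k by omega,
        Nat.add_mul_mod_self_right]
      exact Nat.mod_eq_of_lt (by omega)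
    rw [hdiv]
    apply hM0
    rw [Fin.lt_def]
    simp only [Fin.val_mk]
    omega
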